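/- Let X, Y be complex Hilbert spaces and Yₙ a finite-dimensional complex inner product space, T : X → Y and Tₙ : X → Yₙ bounded linear operators, and x† ∈ X. For α > 0 let x_α be the unique solution of (T*T + αI)x_α = T*T x† and let x_{α,n} be the unique solution of (Tₙ*Tₙ + αI)x_{α,n} = Tₙ*Tₙ x†. If ε > 0 satisfies ‖T*T − Tₙ*Tₙ‖ ≤ ε, then ‖x_α − x_{α,n}‖ ≤ (ε/α)·‖x† − x_α‖. -/

import Mathlib

open ContinuousLinearMap

theorem regularized_discretization_difference_bound
    {X Y Yn : Type*} [NormedAddCommGroup X] [InnerProductSpace ℂ X] [CompleteSpace X]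
    [NormedAddCommGroup Y] [InnerProductSpace ℂ Y] [CompleteSpace Y]
    [NormedAddCommGroup Yn] [InnerProductSpace ℂ Yn] [FiniteDimensional ℂ Yn]
    (T : X →L[ℂ] Y) (Tn : X →L[ℂ] Yn) (xdag : X)
    (α : ℝ) (hα : 0 < α) (xa xan : X)
    (hxa : (adjoint T ∘L T) xa + α • xa = (adjoint T ∘L T) xdag)
    (hxan : (adjoint Tn ∘L Tn) xan + α • xan = (adjoint Tn ∘L Tn) xdag)
    (ε : ℝ) (hε : 0 < ε)
    (hnorm : ‖(adjoint T ∘L T) - (adjoint Tn ∘L Tn)‖ ≤ ε) :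
    ‖xa - xan‖ ≤ (ε / α) * ‖xdag - xa‖ := by
  set A := adjoint T ∘L T with hA
  set B := adjoint Tn ∘L Tn with hB
  set v := xa - xan with hv
  have h1 : α • xa = A xdag - A xa := by
    rw [eq_sub_iff_add_eq, add_comm]; exact hxa
  have h2 : α • xan = B xdag - B xan := by
    rw [eq_sub_iff_add_eq, add_comm]; exact hxan
  have key : B v + α • v = (A - B) (xdag - xa) := by
    simp only [hv, map_sub, smul_sub, sub_apply, h1, h2]
    abel
  have upper : ‖B v + α • v‖ ≤ ε * ‖xdag - xa‖ := by
    rw [key]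
    calc ‖(A - B) (xdag - xa)‖ ≤ ‖A - B‖ * ‖xdag - xa‖ := (A - B).le_opNorm _
      _ ≤ ε * ‖xdag - xa‖ := by
        apply mul_le_mul_of_nonneg_right hnorm (norm_nonneg _)
  have innerB : (inner ℂ (B v) v : ℂ).re = ‖Tn v‖ ^ 2 := by
    rw [hB, comp_apply, adjoint_inner_left]
    exact inner_self_eq_norm_sq (𝕜 := ℂ) (Tn v)
  have lower : α * ‖v‖ ^ 2 ≤ ‖B v + α • v‖ * ‖v‖ := by
    have h3 : α * ‖v‖ ^ 2 ≤ (inner ℂ (B v + α • v) v : ℂ).re := by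
      have hs : (inner ℂ ((α:ℝ) • v) v : ℂ).re = α * ‖v‖ ^ 2 := by
        rw [RCLike.real_smul_eq_coe_smul (K := ℂ), inner_smul_left]
        have hvv : (inner ℂ v v : ℂ).re = ‖v‖ ^ 2 := inner_self_eq_norm_sq (𝕜 := ℂ) v
        simp [Complex.mul_re, hvv, inner_self_im (𝕜 := ℂ), ← Complex.ofReal_pow]
      rw [inner_add_left, Complex.add_re, innerB, hs]
      nlinarith [sq_nonneg ‖Tn v‖]
    calc α * ‖v‖ ^ 2 ≤ (inner ℂ (B v + α • v) v : ℂ).re := h3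
      _ ≤ ‖B v + α • v‖ * ‖v‖ := re_inner_le_norm (𝕜 := ℂ) _ _
  have final : α * ‖v‖ ^ 2 ≤ ε * ‖xdag - xa‖ * ‖v‖ :=
    lower.trans (mul_le_mul_of_nonneg_right upper (norm_nonneg _))
  rcases eq_or_lt_of_le (norm_nonneg v) with h | h
  · rw [← h]
    positivity
  · rw [← mul_le_mul_iff_left₀ h] at *
    have : ε / α * ‖xdag - xa‖ * ‖v‖ = (ε * ‖xdag - xa‖ * ‖v‖) / α := by ring
    rw [this, le_div_iff₀ hα]
    nlinarith [final]
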